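/- Let 0 < σ < 1 and g = (a_{ij}) ∈ SL(2,ℂ). For every continuous compactly supported function f : ℂ → ℂ, the function (T^σ(g)f)(z) = |a_{12}z + a_{22}|^{-2-2σ} f((a_{11}z + a_{21})/(a_{12}z + a_{22})) (defined for z with a_{12}z + a_{22} ≠ 0) satisfies B(T^σ(g)f, T^σ(g)f) = B(f,f), where B(f₁,f₂) = ∬_{ℂ×ℂ} f₁(z) · conj(f₂(w)) · |z − w|^{-(2-2σ)} dA(z) dA(w) and dA is Lebesgue measure on ℂ. -/

import Mathlib

open MeasureTheory Complex

noncomputable section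

/-- The complementary series bilinear pairing
`B(f₁,f₂) = ∬_{ℂ×ℂ} f₁(z) conj(f₂(w)) |z−w|^{-(2-2σ)} dA(z) dA(w)`. -/
def complementaryFormC (σ : ℝ) (f₁ f₂ : ℂ → ℂ) : ℂ :=
  ∫ p : ℂ × ℂ, f₁ p.1 * (starRingEnd ℂ) (f₂ p.2) *
    ((‖p.1 - p.2‖ ^ (-(2 - 2 * σ)) : ℝ) : ℂ)

/-- The complementary series operator `T^σ(g)` of `SL(2,ℂ)`. -/
def complementarySeriesC (σ : ℝ) (g : Matrix.SpecialLinearGroup (Fin 2) ℂ)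
    (f : ℂ → ℂ) : ℂ → ℂ := fun z =>
  ((‖g.1 0 1 * z + g.1 1 1‖ ^ (-2 - 2 * σ) : ℝ) : ℂ) *
    f ((g.1 0 0 * z + g.1 1 0) / (g.1 0 1 * z + g.1 1 1))

/-- The real determinant of multiplication by `v : ℂ` is `normSq v`. -/
lemma det_restrictScalars_smulRight (v : ℂ) :
    (((1 : ℂ →L[ℂ] ℂ).smulRight v).restrictScalars ℝ).det = Complex.normSq v := by
  have h : ((((1 : ℂ →L[ℂ] ℂ).smulRight v).restrictScalars ℝ : ℂ →L[ℝ] ℂ) : ℂ →ₗ[ℝ] ℂ)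
      = Algebra.lmul ℝ ℂ v := by
    ext x
    simp [mul_comm]
  rw [ContinuousLinearMap.det, h, ← Algebra.norm_apply, Algebra.norm_complex_apply]

/-- Determinant of a product map. -/
lemma det_prodMap_complex (A B : ℂ →L[ℝ] ℂ) : (A.prodMap B).det = A.det * B.det := by
  rw [ContinuousLinearMap.det, ContinuousLinearMap.det, ContinuousLinearMap.det,
    ← LinearMap.det_toMatrix (Complex.basisOneI.prod Complex.basisOneI),
    ← LinearMap.det_toMatrix Complex.basisOneI, ← LinearMap.det_toMatrix Complex.basisOneI]
  rw [show ((A.prodMap B : ℂ × ℂ →L[ℝ] ℂ × ℂ) : ℂ × ℂ →ₗ[ℝ] ℂ × ℂ)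
      = LinearMap.prodMap (A : ℂ →ₗ[ℝ] ℂ) (B : ℂ →ₗ[ℝ] ℂ) from rfl,
    LinearMap.toMatrix_prodMap, Matrix.det_fromBlocks_zero₂₁]

/-- For `0 < σ < 1`, `g ∈ SL(2,ℂ)`, and every continuous compactly supported `f : ℂ → ℂ`,
`B(T^σ(g)f, T^σ(g)f) = B(f,f)`: unitarity of the complementary series of `SL(2,ℂ)`. -/
theorem complementarySeriesC_unitary (σ : ℝ) (hσ₀ : 0 < σ) (hσ₁ : σ < 1)
    (g : Matrix.SpecialLinearGroup (Fin 2) ℂ) (f : ℂ → ℂ)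
    (hf : Continuous f) (hsupp : HasCompactSupport f) :
    complementaryFormC σ (complementarySeriesC σ g f) (complementarySeriesC σ g f)
      = complementaryFormC σ f f := by
  set a := g.1 0 0 with ha
  set c := g.1 0 1 with hc'
  set b := g.1 1 0 with hb
  set d := g.1 1 1 with hd
  have hdet : a * d - c * b = 1 := by
    have h2 := g.2
    rwa [Matrix.det_fin_two] at h2
  set h : ℂ → ℂ := fun z => (a * z + b) / (c * z + d) with hh
  set s : Set ℂ := {z | c * z + d ≠ 0} with hs
  have hso : IsOpen s := by
    have : s = (fun z => c * z + d) ⁻¹' ({0}ᶜ) := rfl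
    rw [this]
    exact IsOpen.preimage (by continuity) isOpen_compl_singleton
  -- key difference identity
  have key : ∀ z ∈ s, ∀ w ∈ s, h z - h w = (z - w) / ((c * z + d) * (c * w + d)) := by
    intro z hz w hw
    rw [hh]
    simp only
    rw [div_sub_div _ _ hz hw, div_eq_div_iff (mul_ne_zero hz hw) (mul_ne_zero hz hw)]
    ring_nf
    linear_combination (z - w) * (c * z + d) * (c * w + d) * hdet
  -- injectivity
  have hinj1 : Set.InjOn h s := by
    intro z hz w hw he
    have hk := key z hz w hw
    rw [he, sub_self] at hk
    have := (div_eq_zero_iff.mp hk.symm).resolve_right (mul_ne_zero hz hw)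
    exact sub_eq_zero.mp this
  -- derivative
  have hderiv : ∀ z ∈ s, HasDerivAt h (((c * z + d) ^ 2)⁻¹) z := by
    intro z hz
    have h1 : HasDerivAt (fun z : ℂ => a * z + b) a z := by
      simpa using ((hasDerivAt_id z).const_mul a).add_const b
    have h2 : HasDerivAt (fun z : ℂ => c * z + d) c z := by
      simpa using ((hasDerivAt_id z).const_mul c).add_const d
    have h3 := h1.div h2 hz
    have h4 : (a * (c * z + d) - (a * z + b) * c) / (c * z + d) ^ 2 = ((c * z + d) ^ 2)⁻¹ := by
      rw [show a * (c * z + d) - (a * z + b) * c = 1 by linear_combination hdet]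
      rw [one_div]
    rwa [h4] at h3
  -- almost-surjectivity
  have hTc : volume ((h '' s)ᶜ) = 0 := by
    by_cases hc0 : c = 0
    · have had : a * d = 1 := by linear_combination hdet + b * hc0
      have ha0 : a ≠ 0 := left_ne_zero_of_mul_eq_one had
      have hd0 : d ≠ 0 := right_ne_zero_of_mul_eq_one had
      have himg : h '' s = Set.univ := by
        ext u
        simp only [Set.mem_univ, iff_true]
        refine ⟨(u * d - b) / a, ?_, ?_⟩
        · simp [hs, hc0, hd0]
        · rw [hh]
          simp only [hc0]
          field_simp
          ring
      rw [himg, Set.compl_univ]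
      exact measure_empty
    · refine measure_mono_null ?_ (measure_singleton (a / c))
      intro u hu
      simp only [Set.mem_compl_iff] at hu
      simp only [Set.mem_singleton_iff]
      by_contra hne
      apply hu
      have hacu : a - c * u ≠ 0 := by
        intro h0
        exact hne (by field_simp; linear_combination -h0)
      refine ⟨(d * u - b) / (a - c * u), ?_, ?_⟩
      · show c * ((d * u - b) / (a - c * u)) + d ≠ 0
        have : c * ((d * u - b) / (a - c * u)) + d = (a - c * u)⁻¹ := by
          field_simp
          linear_combination hdet
        rw [this]
        exact inv_ne_zero hacu
      · rw [hh]
        simp only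
        have h1 : a * ((d * u - b) / (a - c * u)) + b = u / (a - c * u) := by
          rw [mul_div_assoc', div_add' _ _ _ hacu, div_left_inj' hacu]
          linear_combination u * hdet
        have h2 : c * ((d * u - b) / (a - c * u)) + d = (a - c * u)⁻¹ := by
          field_simp
          linear_combination hdet
        rw [h1, h2]
        rw [div_inv_eq_mul, div_mul_cancel₀ u hacu]
  have hsc : volume (sᶜ) = 0 := by
    by_cases hc0 : c = 0
    · have had : a * d = 1 := by linear_combination hdet + b * hc0
      have hd0 : d ≠ 0 := right_ne_zero_of_mul_eq_one had
      have : sᶜ = ∅ := by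
        ext z
        simp [hs, hc0, hd0]
      rw [this]; exact measure_empty
    · refine measure_mono_null ?_ (measure_singleton (-d / c))
      intro z hz
      simp only [Set.mem_compl_iff, hs, Set.mem_setOf_eq, not_not] at hz
      simp only [Set.mem_singleton_iff]
      field_simp
      linear_combination hz
  -- product null complement
  have hprodnull : ∀ A : Set ℂ, volume Aᶜ = 0 → volume ((A ×ˢ A)ᶜ : Set (ℂ × ℂ)) = 0 := by
    intro A hA
    have hsub : ((A ×ˢ A)ᶜ : Set (ℂ × ℂ)) ⊆ (Aᶜ ×ˢ (Set.univ : Set ℂ)) ∪ (Set.univ ×ˢ Aᶜ) := by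
      intro p hp
      simp only [Set.mem_compl_iff, Set.mem_prod, not_and_or, Set.mem_union, Set.mem_univ,
        true_and, and_true] at *
      tauto
    refine measure_mono_null hsub (measure_union_null ?_ ?_) <;>
      rw [MeasureTheory.Measure.volume_eq_prod, Measure.prod_prod] <;> simp [hA]
  -- set up change of variables
  have hS : MeasurableSet (s ×ˢ s) := hso.measurableSet.prod hso.measurableSet
  set D : ℂ × ℂ → (ℂ × ℂ →L[ℝ] ℂ × ℂ) := fun p =>
    (((1 : ℂ →L[ℂ] ℂ).smulRight (((c * p.1 + d) ^ 2)⁻¹)).restrictScalars ℝ).prodMap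
      (((1 : ℂ →L[ℂ] ℂ).smulRight (((c * p.2 + d) ^ 2)⁻¹)).restrictScalars ℝ) with hD
  have hDf : ∀ p ∈ s ×ˢ s, HasFDerivWithinAt (Prod.map h h) (D p) (s ×ˢ s) p := by
    rintro ⟨z, w⟩ ⟨hz, hw⟩
    exact (HasFDerivAt.prodMap _ ((hderiv z hz).hasFDerivAt.restrictScalars ℝ)
      ((hderiv w hw).hasFDerivAt.restrictScalars ℝ)).hasFDerivWithinAt
  have hinj : Set.InjOn (Prod.map h h) (s ×ˢ s) := hinj1.prodMap hinj1
  set F : ℂ × ℂ → ℂ := fun p => f p.1 * (starRingEnd ℂ) (f p.2) *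
    ((‖p.1 - p.2‖ ^ (-(2 - 2 * σ)) : ℝ) : ℂ) with hF
  set Φ : ℂ × ℂ → ℂ := fun p => complementarySeriesC σ g f p.1 *
    (starRingEnd ℂ) (complementarySeriesC σ g f p.2) *
    ((‖p.1 - p.2‖ ^ (-(2 - 2 * σ)) : ℝ) : ℂ) with hΦ
  have himageq : Prod.map h h '' (s ×ˢ s) = (h '' s) ×ˢ (h '' s) := by
    ext ⟨u, v⟩
    simp only [Set.mem_image, Set.mem_prod, Prod.map, Prod.exists, Prod.mk.injEq]
    constructor
    · rintro ⟨z, w, ⟨hz, hw⟩, h1, h2⟩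
      exact ⟨⟨z, hz, h1⟩, ⟨w, hw, h2⟩⟩
    · rintro ⟨⟨z, hz, h1⟩, ⟨w, hw, h2⟩⟩
      exact ⟨z, w, ⟨hz, hw⟩, h1, h2⟩
  -- pointwise identity
  have hpt : ∀ p ∈ s ×ˢ s, Φ p = |(D p).det| • F (Prod.map h h p) := by
    rintro ⟨z, w⟩ ⟨hz, hw⟩
    set u := ‖c * z + d‖ with hu'
    set v := ‖c * w + d‖ with hv'
    set r := ‖z - w‖ with hr'
    have hu : 0 < u := norm_pos_iff.mpr hz
    have hv : 0 < v := norm_pos_iff.mpr hw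
    have hr : 0 ≤ r := norm_nonneg _
    have hdet1 : (D (z, w)).det = (u ^ 4)⁻¹ * (v ^ 4)⁻¹ := by
      rw [hD]
      simp only
      rw [det_prodMap_complex, det_restrictScalars_smulRight, det_restrictScalars_smulRight]
      rw [map_inv₀ Complex.normSq, map_inv₀ Complex.normSq, map_pow, map_pow]
      rw [Complex.normSq_eq_norm_sq, Complex.normSq_eq_norm_sq, ← hu', ← hv']
      ring
    have habs : ‖h z - h w‖ = r / (u * v) := by
      rw [key z hz w hw, norm_div, norm_mul, hu', hv', hr']
    -- real scalar identity
    have hreal : (u ^ 4 : ℝ)⁻¹ * (v ^ 4)⁻¹ * (r / (u * v)) ^ (-(2 - 2 * σ))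
        = u ^ (-2 - 2 * σ) * v ^ (-2 - 2 * σ) * r ^ (-(2 - 2 * σ)) := by
      have hu4 : (u ^ (4 : ℕ) : ℝ)⁻¹ = u ^ (-(4 : ℝ)) := by
        rw [Real.rpow_neg hu.le, ← Real.rpow_natCast u 4]
        norm_num
      have hv4 : (v ^ (4 : ℕ) : ℝ)⁻¹ = v ^ (-(4 : ℝ)) := by
        rw [Real.rpow_neg hv.le, ← Real.rpow_natCast v 4]
        norm_num
      have hue : u ^ (-2 - 2 * σ) = u ^ (-(4 : ℝ)) * u ^ (2 - 2 * σ) := by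
        rw [← Real.rpow_add hu]; congr 1; ring
      have hve : v ^ (-2 - 2 * σ) = v ^ (-(4 : ℝ)) * v ^ (2 - 2 * σ) := by
        rw [← Real.rpow_add hv]; congr 1; ring
      rw [Real.div_rpow hr (mul_nonneg hu.le hv.le), Real.mul_rpow hu.le hv.le,
        hu4, hv4, hue, hve]
      rw [Real.rpow_neg hu.le (2 - 2 * σ), Real.rpow_neg hv.le (2 - 2 * σ)]
      field_simp
    rw [hΦ, hF]
    simp only [complementarySeriesC, Prod.map, hdet1]
    rw [show (g.1 0 0 * z + g.1 1 0) / (g.1 0 1 * z + g.1 1 1) = h z from rfl,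
      show (g.1 0 0 * w + g.1 1 0) / (g.1 0 1 * w + g.1 1 1) = h w from rfl,
      show ‖g.1 0 1 * z + g.1 1 1‖ = u from rfl,
      show ‖g.1 0 1 * w + g.1 1 1‖ = v from rfl]
    have habs' : ((‖h z - h w‖ ^ (-(2 - 2 * σ)) : ℝ) : ℂ)
        = (((r / (u * v)) ^ (-(2 - 2 * σ)) : ℝ) : ℂ) := by rw [habs]
    rw [habs']
    have hnn : (0:ℝ) ≤ (u ^ 4)⁻¹ * (v ^ 4)⁻¹ := by positivity
    rw [_root_.abs_of_nonneg hnn, Complex.real_smul]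
    rw [map_mul, Complex.conj_ofReal]
    rw [← hr']
    rw [show ((((u ^ 4)⁻¹ * (v ^ 4)⁻¹ : ℝ)) : ℂ) *
          (f (h z) * (starRingEnd ℂ) (f (h w)) * (((r / (u * v)) ^ (-(2 - 2 * σ)) : ℝ) : ℂ))
        = ((((u ^ 4)⁻¹ * (v ^ 4)⁻¹ * (r / (u * v)) ^ (-(2 - 2 * σ)) : ℝ)) : ℂ) *
          (f (h z) * (starRingEnd ℂ) (f (h w))) from by push_cast; ring]
    rw [hreal]
    push_cast
    ring
  haveI : (volume : Measure (ℂ × ℂ)).IsAddHaarMeasure := by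
    rw [MeasureTheory.Measure.volume_eq_prod]; infer_instance
  -- main chain
  calc complementaryFormC σ (complementarySeriesC σ g f) (complementarySeriesC σ g f)
      = ∫ p : ℂ × ℂ, Φ p := rfl
    _ = ∫ p in s ×ˢ s, Φ p := by
        rw [← setIntegral_univ]
        exact (setIntegral_congr_set (ae_eq_univ.mpr (hprodnull s hsc))).symm
    _ = ∫ p in s ×ˢ s, |(D p).det| • F (Prod.map h h p) := setIntegral_congr_fun hS hpt
    _ = ∫ p in Prod.map h h '' (s ×ˢ s), F p :=
        (integral_image_eq_integral_abs_det_fderiv_smul volume hS hDf hinj F).symm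
    _ = ∫ p in (h '' s) ×ˢ (h '' s), F p := by rw [himageq]
    _ = ∫ p : ℂ × ℂ, F p :=
        (setIntegral_congr_set (ae_eq_univ.mpr (hprodnull _ hTc))).trans setIntegral_univ
    _ = complementaryFormC σ f f := rfl
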